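/- arXiv:1209.2502 — 2 statements merged into one kernel-verified Lean document; each statement's English description precedes it below -/
import Mathlib

section
/- Let Ψ be a subset-generating function, let A_0, A_1 ∈ 𝔍 and let α_0, β_0 ∈ [0,1]. Then the binary partition average has the metric property: d_μ(α_0 A_0 ⊗ (1−α_0) A_1, β_0 A_0 ⊗ (1−β_0) A_1) = |α_0 − β_0| · d_μ(A_0, A_1). -/
open MeasureTheory Set

noncomputable section

/-- Euclidean space ℝ^m. -/
abbrev Em (m : ℕ) : Type := EuclideanSpace ℝ (Fin m)

/-- A bounded set whose topological boundary has Lebesgue measure zero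
(bounded Jordan measurable set). -/
def JordanMeas {m : ℕ} (A : Set (Em m)) : Prop :=
  Bornology.IsBounded A ∧ volume (frontier A) = 0

/-- A bounded set equal to the closure of its interior (regular compact set). -/
def RegCompact {m : ℕ} (A : Set (Em m)) : Prop :=
  Bornology.IsBounded A ∧ A = closure (interior A)

/-- Membership in the collection 𝔍 of regular compact Jordan measurable sets. -/
def MemJ {m : ℕ} (A : Set (Em m)) : Prop :=
  RegCompact A ∧ JordanMeas A

/-- The partition element Ω_χ = (⋂_{k∈χ} A_k) \ (⋃_{l∉χ} A_l). -/
def partElem {m n : ℕ} (A : Fin (n+1) → Set (Em m)) (χ : Finset (Fin (n+1))) : Set (Em m) :=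
  (⋂ k ∈ χ, A k) \ (⋃ l ∈ χᶜ, A l)

/-- A subset-generating function Ψ. -/
structure SubsetGen (m : ℕ) where
  Ψ : Set (Em m) → ℝ → Set (Em m)
  subset : ∀ A t, JordanMeas A → 0 ≤ t → t ≤ 1 → Ψ A t ⊆ A
  memJ : ∀ A t, JordanMeas A → 0 ≤ t → t ≤ 1 → MemJ (Ψ A t)
  meas : ∀ A t, JordanMeas A → 0 ≤ t → t ≤ 1 →
    volume (Ψ A t) = ENNReal.ofReal t * volume A
  mono : ∀ A s t, JordanMeas A → 0 ≤ s → s ≤ t → t ≤ 1 → Ψ A s ⊆ Ψ A t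

/-- The partition average ⊗_{i=0}^n α_i A_i = ⋃_{∅≠χ⊆{0,…,n}} Ψ(Ω_χ, ∑_{k∈χ} α_k). -/
def partAvg {m n : ℕ} (S : SubsetGen m) (α : Fin (n+1) → ℝ)
    (A : Fin (n+1) → Set (Em m)) : Set (Em m) :=
  ⋃ χ ∈ {χ : Finset (Fin (n+1)) | χ.Nonempty}, S.Ψ (partElem A χ) (∑ k ∈ χ, α k)

/-- The symmetric difference (pseudo)metric d_μ(A,B) = μ(A Δ B). -/
def dmu {m : ℕ} (A B : Set (Em m)) : ℝ :=
  (volume ((A \ B) ∪ (B \ A))).toReal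

/-- The Bernstein weight b(n,x;i) = C(n,i)·x^i·(1−x)^{n−i}. -/
def bern (n i : ℕ) (x : ℝ) : ℝ :=
  (n.choose i : ℝ) * x ^ i * (1 - x) ^ (n - i)

/-- The set-valued Bernstein operator B_n(F,x) = ⊗_{i=0}^n b(n,x;i)·F(i/n). -/
def setBern {m : ℕ} (S : SubsetGen m) (F : ℝ → Set (Em m)) (n : ℕ) (x : ℝ) : Set (Em m) :=
  partAvg S (fun i : Fin (n+1) => bern n (i : ℕ) x)
    (fun i : Fin (n+1) => F ((i : ℕ) / n))

/-! ### Auxiliary lemmas -/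

lemma nm_of_jm {m : ℕ} {A : Set (Em m)} (h : JordanMeas A) :
    NullMeasurableSet A (volume : Measure (Em m)) := by
  have hsub : A \ interior A ⊆ frontier A := Set.diff_subset_diff_left subset_closure
  have hnull : volume (A \ interior A) = 0 := measure_mono_null hsub h.2
  have heq : A = interior A ∪ (A \ interior A) := (Set.union_diff_cancel interior_subset).symm
  rw [heq]
  exact (measurableSet_interior.nullMeasurableSet).union (NullMeasurableSet.of_null hnull)

lemma frontier_null_inter {m : ℕ} {A B : Set (Em m)} (hA : volume (frontier A) = 0)
    (hB : volume (frontier B) = 0) : volume (frontier (A ∩ B)) = 0 := by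
  refine measure_mono_null ((frontier_inter_subset A B).trans ?_)
    ((measure_union_null_iff).2 ⟨hA, hB⟩)
  rintro x (h|h)
  · exact Or.inl h.1
  · exact Or.inr h.2

lemma jm_inter {m : ℕ} {A B : Set (Em m)} (hA : JordanMeas A) (hB : JordanMeas B) :
    JordanMeas (A ∩ B) :=
  ⟨hA.1.subset Set.inter_subset_left, frontier_null_inter hA.2 hB.2⟩

lemma jm_diff {m : ℕ} {A B : Set (Em m)} (hA : JordanMeas A) (hB : JordanMeas B) :
    JordanMeas (A \ B) := by
  refine ⟨hA.1.subset Set.diff_subset, ?_⟩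
  rw [Set.diff_eq]
  exact frontier_null_inter hA.2 (by rw [frontier_compl]; exact hB.2)

lemma partElem_zero {m : ℕ} (A : Fin 2 → Set (Em m)) :
    partElem A {0} = A 0 \ A 1 := by
  have hc : ({0} : Finset (Fin 2))ᶜ = {1} := by decide
  simp [partElem, hc]

lemma partElem_one {m : ℕ} (A : Fin 2 → Set (Em m)) :
    partElem A {1} = A 1 \ A 0 := by
  have hc : ({1} : Finset (Fin 2))ᶜ = {0} := by decide
  simp [partElem, hc]

lemma partElem_both {m : ℕ} (A : Fin 2 → Set (Em m)) :
    partElem A {0,1} = A 0 ∩ A 1 := by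
  have hc : ({0,1} : Finset (Fin 2))ᶜ = ∅ := by decide
  simp [partElem, hc, Set.inter_comm]

lemma partAvg_expand {m : ℕ} (S : SubsetGen m) (α : Fin 2 → ℝ) (A : Fin 2 → Set (Em m)) :
    partAvg S α A = S.Ψ (A 0 \ A 1) (α 0) ∪ S.Ψ (A 1 \ A 0) (α 1)
      ∪ S.Ψ (A 0 ∩ A 1) (α 0 + α 1) := by
  have h : ∀ χ : Finset (Fin 2), χ.Nonempty ↔ (χ = {0} ∨ χ = {1} ∨ χ = {0,1}) := by decide
  have hset : {χ : Finset (Fin 2) | χ.Nonempty}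
      = {({0} : Finset (Fin 2)), {1}, {0,1}} := Set.ext fun χ => h χ
  have hs01 : ∑ k ∈ ({0,1} : Finset (Fin 2)), α k = α 0 + α 1 := by
    rw [show ({0,1} : Finset (Fin 2)) = insert 0 {1} from rfl,
      Finset.sum_insert (by decide), Finset.sum_singleton]
  rw [partAvg, hset]
  simp [Set.biUnion_insert, partElem_zero, partElem_one, partElem_both, hs01,
    Set.union_assoc]

lemma dmu_comm {m : ℕ} (A B : Set (Em m)) : dmu A B = dmu B A := by
  rw [dmu, dmu, Set.union_comm]

lemma key {m : ℕ} (S : SubsetGen m) (A₀ A₁ : Set (Em m))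
    (h₀ : MemJ A₀) (h₁ : MemJ A₁)
    (a b : ℝ) (hb0 : 0 ≤ b) (hba : b ≤ a) (ha1 : a ≤ 1) :
    dmu (partAvg S ![a, 1 - a] ![A₀, A₁]) (partAvg S ![b, 1 - b] ![A₀, A₁]) =
      (a - b) * dmu A₀ A₁ := by
  have ha0 : (0:ℝ) ≤ a := hb0.trans hba
  have hb1 : b ≤ 1 := hba.trans ha1
  have hJ0 : JordanMeas (A₀ \ A₁) := jm_diff h₀.2 h₁.2
  have hJ1 : JordanMeas (A₁ \ A₀) := jm_diff h₁.2 h₀.2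
  have hJI : JordanMeas (A₀ ∩ A₁) := jm_inter h₀.2 h₁.2
  -- expand the two partition averages
  have hPa : partAvg S ![a, 1 - a] ![A₀, A₁]
      = S.Ψ (A₀ \ A₁) a ∪ S.Ψ (A₁ \ A₀) (1 - a) ∪ S.Ψ (A₀ ∩ A₁) 1 := by
    rw [partAvg_expand]
    simp only [Matrix.cons_val_zero, Matrix.cons_val_one, Matrix.head_cons]
    rw [show a + (1 - a) = 1 by ring]
  have hPb : partAvg S ![b, 1 - b] ![A₀, A₁]
      = S.Ψ (A₀ \ A₁) b ∪ S.Ψ (A₁ \ A₀) (1 - b) ∪ S.Ψ (A₀ ∩ A₁) 1 := by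
    rw [partAvg_expand]
    simp only [Matrix.cons_val_zero, Matrix.cons_val_one, Matrix.head_cons]
    rw [show b + (1 - b) = 1 by ring]
  set Xa := S.Ψ (A₀ \ A₁) a with hXa_def
  set Xb := S.Ψ (A₀ \ A₁) b with hXb_def
  set Ya := S.Ψ (A₁ \ A₀) (1 - a) with hYa_def
  set Yb := S.Ψ (A₁ \ A₀) (1 - b) with hYb_def
  set Z := S.Ψ (A₀ ∩ A₁) 1 with hZ_def
  have hXa_sub : Xa ⊆ A₀ \ A₁ := S.subset _ a hJ0 ha0 ha1
  have hXb_sub : Xb ⊆ A₀ \ A₁ := S.subset _ b hJ0 hb0 hb1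
  have hYa_sub : Ya ⊆ A₁ \ A₀ := S.subset _ (1-a) hJ1 (by linarith) (by linarith)
  have hYb_sub : Yb ⊆ A₁ \ A₀ := S.subset _ (1-b) hJ1 (by linarith) (by linarith)
  have hZ_sub : Z ⊆ A₀ ∩ A₁ := S.subset _ 1 hJI zero_le_one le_rfl
  have hXmono : Xb ⊆ Xa := S.mono _ b a hJ0 hb0 hba ha1
  have hYmono : Ya ⊆ Yb := S.mono _ (1-a) (1-b) hJ1 (by linarith) (by linarith) (by linarith)
  -- the symmetric difference
  have hsd : ((Xa ∪ Ya ∪ Z) \ (Xb ∪ Yb ∪ Z)) ∪ ((Xb ∪ Yb ∪ Z) \ (Xa ∪ Ya ∪ Z))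
      = (Xa \ Xb) ∪ (Yb \ Ya) := by
    ext x
    simp only [Set.mem_union, Set.mem_diff, or_assoc]
    have f1 : x ∈ Xb → x ∈ Xa := fun h => hXmono h
    have f2 : x ∈ Ya → x ∈ Yb := fun h => hYmono h
    have f3 : x ∈ Xa → x ∈ Yb → False := fun h h' => (hXa_sub h).2 (hYb_sub h').1
    have f4 : x ∈ Xa → x ∈ Z → False := fun h h' => (hXa_sub h).2 (hZ_sub h').2
    have f5 : x ∈ Yb → x ∈ Z → False := fun h h' => (hYb_sub h).2 (hZ_sub h').1
    constructor
    · rintro (⟨h1, h2⟩ | ⟨h1, h2⟩)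
      · push_neg at h2
        rcases h1 with h | h | h
        · exact Or.inl ⟨h, h2.1⟩
        · exact absurd (f2 h) h2.2.1
        · exact absurd h h2.2.2
      · push_neg at h2
        rcases h1 with h | h | h
        · exact absurd (f1 h) h2.1
        · exact Or.inr ⟨h, h2.2.1⟩
        · exact absurd h h2.2.2
    · rintro (⟨h1, h2⟩ | ⟨h1, h2⟩)
      · refine Or.inl ⟨Or.inl h1, ?_⟩
        rintro (h | h | h)
        · exact h2 h
        · exact f3 h1 h
        · exact f4 h1 h
      · refine Or.inr ⟨Or.inr (Or.inl h1), ?_⟩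
        rintro (h | h | h)
        · exact f3 h h1
        · exact h2 h
        · exact f5 h1 h
  -- null measurability
  have nmXb : NullMeasurableSet Xb volume := nm_of_jm (S.memJ _ b hJ0 hb0 hb1).2
  have nmYa : NullMeasurableSet Ya volume :=
    nm_of_jm (S.memJ _ (1-a) hJ1 (by linarith) (by linarith)).2
  have nmYbYa : NullMeasurableSet (Yb \ Ya) volume :=
    NullMeasurableSet.diff (nm_of_jm (S.memJ _ (1-b) hJ1 (by linarith) (by linarith)).2) nmYa
  -- finiteness
  have finD0 : volume (A₀ \ A₁) ≠ ⊤ := hJ0.1.measure_lt_top.ne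
  have finD1 : volume (A₁ \ A₀) ≠ ⊤ := hJ1.1.measure_lt_top.ne
  have finXa : volume Xa ≠ ⊤ := ((hJ0.1.subset hXa_sub).measure_lt_top).ne
  have finXb : volume Xb ≠ ⊤ := ((hJ0.1.subset hXb_sub).measure_lt_top).ne
  have finYa : volume Ya ≠ ⊤ := ((hJ1.1.subset hYa_sub).measure_lt_top).ne
  have finYb : volume Yb ≠ ⊤ := ((hJ1.1.subset hYb_sub).measure_lt_top).ne
  -- disjointness of the two pieces
  have hdisj : Disjoint (Xa \ Xb) (Yb \ Ya) := by
    rw [Set.disjoint_left]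
    rintro x ⟨h1, _⟩ ⟨h2, _⟩
    exact (hXa_sub h1).2 (hYb_sub h2).1
  -- measure values
  have vXa : volume Xa = ENNReal.ofReal a * volume (A₀ \ A₁) := S.meas _ a hJ0 ha0 ha1
  have vXb : volume Xb = ENNReal.ofReal b * volume (A₀ \ A₁) := S.meas _ b hJ0 hb0 hb1
  have vYa : volume Ya = ENNReal.ofReal (1-a) * volume (A₁ \ A₀) :=
    S.meas _ (1-a) hJ1 (by linarith) (by linarith)
  have vYb : volume Yb = ENNReal.ofReal (1-b) * volume (A₁ \ A₀) :=
    S.meas _ (1-b) hJ1 (by linarith) (by linarith)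
  rw [dmu, hPa, hPb, hsd, measure_union₀ nmYbYa hdisj.aedisjoint,
    measure_diff hXmono nmXb finXb, measure_diff hYmono nmYa finYa,
    ENNReal.toReal_add
      (by exact (tsub_le_self.trans_lt (lt_top_iff_ne_top.2 finXa)).ne)
      (by exact (tsub_le_self.trans_lt (lt_top_iff_ne_top.2 finYb)).ne),
    ENNReal.toReal_sub_of_le (measure_mono hXmono) finXa,
    ENNReal.toReal_sub_of_le (measure_mono hYmono) finYb,
    vXa, vXb, vYa, vYb]
  rw [ENNReal.toReal_mul, ENNReal.toReal_mul, ENNReal.toReal_mul, ENNReal.toReal_mul,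
    ENNReal.toReal_ofReal ha0, ENNReal.toReal_ofReal hb0,
    ENNReal.toReal_ofReal (by linarith : (0:ℝ) ≤ 1 - a),
    ENNReal.toReal_ofReal (by linarith : (0:ℝ) ≤ 1 - b)]
  have hdisjD : Disjoint (A₀ \ A₁) (A₁ \ A₀) := by
    rw [Set.disjoint_left]; rintro x ⟨_, h⟩ ⟨h', _⟩; exact h h'
  have hdA : dmu A₀ A₁ = (volume (A₀ \ A₁)).toReal + (volume (A₁ \ A₀)).toReal := by
    rw [dmu, measure_union₀ (nm_of_jm hJ1) hdisjD.aedisjoint, ENNReal.toReal_add finD0 finD1]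
  rw [hdA]; ring

/-- the metric property of the binary partition average:
d_μ(α₀A₀ ⊗ (1−α₀)A₁, β₀A₀ ⊗ (1−β₀)A₁) = |α₀ − β₀| · d_μ(A₀, A₁). -/
theorem stmt_11 {m : ℕ} (S : SubsetGen m) (A₀ A₁ : Set (Em m))
    (h₀ : MemJ A₀) (h₁ : MemJ A₁)
    (a b : ℝ) (ha : a ∈ Set.Icc (0:ℝ) 1) (hb : b ∈ Set.Icc (0:ℝ) 1) :
    dmu (partAvg S ![a, 1 - a] ![A₀, A₁]) (partAvg S ![b, 1 - b] ![A₀, A₁]) =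
      |a - b| * dmu A₀ A₁ := by
  rcases le_total b a with h | h
  · rw [abs_of_nonneg (by linarith)]
    exact key S A₀ A₁ h₀ h₁ a b hb.1 h ha.2
  · rw [dmu_comm, abs_of_nonpos (by linarith), neg_sub]
    exact key S A₀ A₁ h₀ h₁ b a ha.1 h hb.2
end
end

section
/- Let Ψ be a subset-generating function, let F : [0,1] → 𝔍 be a set-valued function, let n ≥ 1, let x ∈ [0,1], and let x′ be a point closest to x among the nodes i/n, i = 0,…,n. Then d_μ(F(x), B_n(F,x)) ≤ 2·d_μ(F(x′), F(x)) + ∑_{i=0}^n b(n,x;i)·d_μ(F(x), F(i/n)). -/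
open MeasureTheory Set

noncomputable section

/-! ### Auxiliary lemmas -/

lemma isClosed_of_regCompact {m : ℕ} {A : Set (Em m)} (h : RegCompact A) : IsClosed A := by
  rw [h.2]; exact isClosed_closure

lemma nullFrontier_biInter {m : ℕ} {ι : Type*} [DecidableEq ι] (s : Finset ι)
    (A : ι → Set (Em m)) (h : ∀ i ∈ s, volume (frontier (A i)) = 0) :
    volume (frontier (⋂ i ∈ s, A i)) = 0 := by
  induction s using Finset.induction_on with
  | empty => simp
  | @insert a s ha ih =>
    rw [Finset.set_biInter_insert]
    refine measure_mono_null ((frontier_inter_subset _ _).trans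
      (union_subset_union inter_subset_left inter_subset_right))
      (measure_union_null (h a (Finset.mem_insert_self a s))
        (ih fun i hi => h i (Finset.mem_insert_of_mem hi)))

lemma nullFrontier_biUnion {m : ℕ} {ι : Type*} [DecidableEq ι] (s : Finset ι)
    (A : ι → Set (Em m)) (h : ∀ i ∈ s, volume (frontier (A i)) = 0) :
    volume (frontier (⋃ i ∈ s, A i)) = 0 := by
  induction s using Finset.induction_on with
  | empty => simp
  | @insert a s ha ih =>
    rw [Finset.set_biUnion_insert]
    refine measure_mono_null ((frontier_union_subset _ _).trans
      (union_subset_union inter_subset_left inter_subset_right))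
      (measure_union_null (h a (Finset.mem_insert_self a s))
        (ih fun i hi => h i (Finset.mem_insert_of_mem hi)))

lemma mem_partElem {m n : ℕ} {A : Fin (n+1) → Set (Em m)} {χ : Finset (Fin (n+1))}
    {y : Em m} : y ∈ partElem A χ ↔ ∀ k, (k ∈ χ ↔ y ∈ A k) := by
  constructor
  · rintro ⟨h1, h2⟩ k
    refine ⟨fun hk => mem_iInter₂.mp h1 k hk, fun hy => ?_⟩
    by_contra hk
    exact h2 (mem_iUnion₂.mpr ⟨k, Finset.mem_compl.mpr hk, hy⟩)
  · intro h
    refine ⟨mem_iInter₂.mpr fun k hk => (h k).1 hk, fun hy => ?_⟩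
    obtain ⟨k, hk, hy⟩ := mem_iUnion₂.mp hy
    exact Finset.mem_compl.mp hk ((h k).2 hy)

lemma partElem_subset {m n : ℕ} {A : Fin (n+1) → Set (Em m)} {χ : Finset (Fin (n+1))}
    {k : Fin (n+1)} (hk : k ∈ χ) : partElem A χ ⊆ A k :=
  fun _ hy => (mem_partElem.mp hy k).1 hk

lemma partElem_disjoint {m n : ℕ} (A : Fin (n+1) → Set (Em m))
    {χ χ' : Finset (Fin (n+1))} (h : χ ≠ χ') :
    Disjoint (partElem A χ) (partElem A χ') := by
  rw [Set.disjoint_left]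
  intro y h1 h2
  exact h (Finset.ext fun k => (mem_partElem.mp h1 k).trans (mem_partElem.mp h2 k).symm)

lemma measurableSet_partElem {m n : ℕ} {A : Fin (n+1) → Set (Em m)}
    (hA : ∀ i, IsClosed (A i)) (χ : Finset (Fin (n+1))) :
    MeasurableSet (partElem A χ) := by
  refine MeasurableSet.diff ?_ ?_
  · exact MeasurableSet.iInter fun k => MeasurableSet.iInter fun _ => (hA k).measurableSet
  · exact MeasurableSet.iUnion fun k => MeasurableSet.iUnion fun _ => (hA k).measurableSet

lemma jordanMeas_partElem {m n : ℕ} {A : Fin (n+1) → Set (Em m)}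
    (hA : ∀ i, JordanMeas (A i)) {χ : Finset (Fin (n+1))} (hχ : χ.Nonempty) :
    JordanMeas (partElem A χ) := by
  obtain ⟨k, hk⟩ := hχ
  refine ⟨(hA k).1.subset (partElem_subset hk), ?_⟩
  rw [partElem, diff_eq]
  refine measure_mono_null ((frontier_inter_subset _ _).trans
    (union_subset_union inter_subset_left inter_subset_right)) (measure_union_null ?_ ?_)
  · exact nullFrontier_biInter χ A fun i _ => (hA i).2
  · rw [frontier_compl]
    exact nullFrontier_biUnion χᶜ A fun i _ => (hA i).2

lemma mem_self_partElem {m n : ℕ} {A : Fin (n+1) → Set (Em m)} {j : Fin (n+1)}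
    {y : Em m} (hy : y ∈ A j) :
    ∃ χ : Finset (Fin (n+1)), j ∈ χ ∧ y ∈ partElem A χ := by
  classical
  refine ⟨Finset.univ.filter (fun k => y ∈ A k), by simp [hy], ?_⟩
  rw [mem_partElem]
  intro k
  simp

lemma dmu_triangle {m : ℕ} (A B C : Set (Em m)) (hA : volume A ≠ ⊤)
    (hB : volume B ≠ ⊤) (hC : volume C ≠ ⊤) : dmu A C ≤ dmu A B + dmu B C := by
  have hd : ∀ X Y : Set (Em m), (X \ Y ∪ Y \ X) = symmDiff X Y := fun X Y =>
    (Set.symmDiff_def X Y).symm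
  have hfin : ∀ X Y : Set (Em m), volume X ≠ ⊤ → volume Y ≠ ⊤ →
      volume (symmDiff X Y) ≠ ⊤ := by
    intro X Y hX hY
    refine ((measure_mono symmDiff_subset_union).trans_lt ?_).ne
    exact (measure_union_le X Y).trans_lt
      (by rw [lt_top_iff_ne_top]; exact ENNReal.add_ne_top.mpr ⟨hX, hY⟩)
  rw [dmu, dmu, dmu, hd, hd, hd]
  calc (volume (symmDiff A C)).toReal
      ≤ (volume (symmDiff A B) + volume (symmDiff B C)).toReal := by
        refine ENNReal.toReal_mono ?_ (measure_symmDiff_le A B C)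
        exact ENNReal.add_ne_top.mpr ⟨hfin A B hA hB, hfin B C hB hC⟩
    _ = (volume (symmDiff A B)).toReal + (volume (symmDiff B C)).toReal :=
        ENNReal.toReal_add (hfin A B hA hB) (hfin B C hB hC)

/-- Core lemma: the distance from one of the sets to the partition average is at
most the weighted average of the distances. -/
lemma dmu_partAvg_le {m n : ℕ} (S : SubsetGen m) (α : Fin (n+1) → ℝ)
    (A : Fin (n+1) → Set (Em m)) (hA : ∀ i, MemJ (A i))
    (hα : ∀ i, 0 ≤ α i) (hsum : ∑ i, α i = 1) (j : Fin (n+1)) :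
    dmu (A j) (partAvg S α A) ≤ ∑ i, α i * dmu (A j) (A i) := by
  classical
  set Ω : Finset (Fin (n+1)) → Set (Em m) := fun χ => partElem A χ with hΩ
  set s : Finset (Fin (n+1)) → ℝ := fun χ => ∑ k ∈ χ, α k with hs
  set P : Finset (Fin (n+1)) → Set (Em m) := fun χ => S.Ψ (Ω χ) (s χ) with hP
  have hclosed : ∀ i, IsClosed (A i) := fun i => isClosed_of_regCompact (hA i).1
  have hΩmeas : ∀ χ, MeasurableSet (Ω χ) := measurableSet_partElem hclosed
  have hs0 : ∀ χ : Finset (Fin (n+1)), 0 ≤ s χ := fun χ =>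
    Finset.sum_nonneg fun i _ => hα i
  have hs1 : ∀ χ : Finset (Fin (n+1)), s χ ≤ 1 := by
    intro χ
    rw [← hsum]
    exact Finset.sum_le_sum_of_subset_of_nonneg (Finset.subset_univ χ) fun i _ _ => hα i
  have hJ : ∀ χ : Finset (Fin (n+1)), χ.Nonempty → JordanMeas (Ω χ) := fun χ hχ =>
    jordanMeas_partElem (fun i => (hA i).2) hχ
  have hPsub : ∀ χ : Finset (Fin (n+1)), χ.Nonempty → P χ ⊆ Ω χ := fun χ hχ =>
    S.subset _ _ (hJ χ hχ) (hs0 χ) (hs1 χ)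
  have hPvol : ∀ χ : Finset (Fin (n+1)), χ.Nonempty →
      volume (P χ) = ENNReal.ofReal (s χ) * volume (Ω χ) := fun χ hχ =>
    S.meas _ _ (hJ χ hχ) (hs0 χ) (hs1 χ)
  have hPclosed : ∀ χ : Finset (Fin (n+1)), χ.Nonempty → IsClosed (P χ) := fun χ hχ =>
    isClosed_of_regCompact (S.memJ _ _ (hJ χ hχ) (hs0 χ) (hs1 χ)).1
  have hΩfin : ∀ χ : Finset (Fin (n+1)), χ.Nonempty → volume (Ω χ) ≠ ⊤ := by
    intro χ hχ
    obtain ⟨k, hk⟩ := hχ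
    exact ((measure_mono (partElem_subset hk)).trans_lt (hA k).2.1.measure_lt_top).ne
  have hPfin : ∀ χ : Finset (Fin (n+1)), χ.Nonempty → volume (P χ) ≠ ⊤ := fun χ hχ =>
    ((measure_mono (hPsub χ hχ)).trans_lt (lt_top_iff_ne_top.mpr (hΩfin χ hχ))).ne
  set B : Set (Em m) := partAvg S α A with hB
  have hBmem : ∀ y, y ∈ B ↔ ∃ χ : Finset (Fin (n+1)), χ.Nonempty ∧ y ∈ P χ := by
    intro y
    simp only [hB, partAvg, mem_iUnion, mem_setOf_eq, exists_prop]
    exact Iff.rfl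
  -- weights in ℝ≥0∞
  set w : Fin (n+1) → ENNReal := fun i => ENNReal.ofReal (α i) with hw
  have hwsum : ∀ χ : Finset (Fin (n+1)), ENNReal.ofReal (s χ) = ∑ k ∈ χ, w k := fun χ =>
    ENNReal.ofReal_sum_of_nonneg fun i _ => hα i
  have hwuniv : (∑ i, w i) = 1 := by
    rw [hw]
    rw [← ENNReal.ofReal_sum_of_nonneg fun i _ => hα i, hsum, ENNReal.ofReal_one]
  have hsplit : ∀ χ : Finset (Fin (n+1)), (∑ i ∈ χᶜ, w i) + ENNReal.ofReal (s χ) = 1 := by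
    intro χ
    rw [hwsum χ, add_comm, Finset.sum_add_sum_compl χ w, hwuniv]
  -- Part 1 : volume (A j \ B)
  have key1 : volume (A j \ B) ≤ ∑ i, w i * volume (A j \ A i) := by
    set Tj : Finset (Finset (Fin (n+1))) :=
      Finset.univ.filter (fun χ => j ∈ χ) with hTj
    have hsub : A j \ B ⊆ ⋃ χ ∈ Tj, (Ω χ \ P χ) := by
      rintro y ⟨hy1, hy2⟩
      obtain ⟨χ, hjχ, hyχ⟩ := mem_self_partElem (A := A) hy1
      have hχne : χ.Nonempty := ⟨j, hjχ⟩
      refine mem_iUnion₂.mpr ⟨χ, by simp [hTj, hjχ], hyχ, fun hyP => ?_⟩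
      exact hy2 ((hBmem y).mpr ⟨χ, hχne, hyP⟩)
    calc volume (A j \ B) ≤ ∑ χ ∈ Tj, volume (Ω χ \ P χ) :=
          le_trans (measure_mono hsub) (measure_biUnion_finset_le _ _)
      _ ≤ ∑ χ ∈ Tj, ∑ i ∈ χᶜ, w i * volume (Ω χ) := by
          refine Finset.sum_le_sum fun χ hχ => ?_
          have hjχ : j ∈ χ := by simpa [hTj] using hχ
          have hχne : χ.Nonempty := ⟨j, hjχ⟩
          rw [measure_diff (hPsub χ hχne)
            ((hPclosed χ hχne).measurableSet.nullMeasurableSet) (hPfin χ hχne),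
            tsub_le_iff_right, hPvol χ hχne, ← Finset.sum_mul, ← add_mul,
            hsplit χ, one_mul]
      _ = ∑ χ ∈ Tj, ∑ i, (if i ∈ χᶜ then w i * volume (Ω χ) else 0) := by
          refine Finset.sum_congr rfl fun χ _ => ?_
          rw [Finset.sum_ite_mem, Finset.univ_inter]
      _ = ∑ i, ∑ χ ∈ Tj, (if i ∈ χᶜ then w i * volume (Ω χ) else 0) :=
          Finset.sum_comm
      _ ≤ ∑ i, w i * volume (A j \ A i) := by
          refine Finset.sum_le_sum fun i _ => ?_
          rw [← Finset.sum_filter, ← Finset.mul_sum]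
          refine mul_le_mul_right ?_ (w i)
          rw [← measure_biUnion_finset
            (fun χ _ χ' _ hne => partElem_disjoint A hne) (fun χ _ => hΩmeas χ)]
          refine measure_mono (iUnion₂_subset fun χ hχ => ?_)
          have h1 : j ∈ χ ∧ i ∈ χᶜ := by simpa [hTj] using hχ
          intro y hy
          exact ⟨(mem_partElem.mp hy j).1 h1.1,
            fun hyi => Finset.mem_compl.mp h1.2 ((mem_partElem.mp hy i).2 hyi)⟩
  -- Part 2 : volume (B \ A j)
  have key2 : volume (B \ A j) ≤ ∑ i, w i * volume (A i \ A j) := by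
    set T' : Finset (Finset (Fin (n+1))) :=
      Finset.univ.filter (fun χ => χ.Nonempty ∧ j ∉ χ) with hT'
    have hsub : B \ A j ⊆ ⋃ χ ∈ T', P χ := by
      rintro y ⟨hy1, hy2⟩
      obtain ⟨χ, hχne, hyP⟩ := (hBmem y).mp hy1
      have hjχ : j ∉ χ := fun hj => hy2 (partElem_subset hj (hPsub χ hχne hyP))
      exact mem_iUnion₂.mpr ⟨χ, by simp [hT', hχne, hjχ], hyP⟩
    calc volume (B \ A j) ≤ ∑ χ ∈ T', volume (P χ) :=
          le_trans (measure_mono hsub) (measure_biUnion_finset_le _ _)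
      _ = ∑ χ ∈ T', ∑ i ∈ χ, w i * volume (Ω χ) := by
          refine Finset.sum_congr rfl fun χ hχ => ?_
          have hχne : χ.Nonempty := (by simpa [hT'] using hχ : χ.Nonempty ∧ j ∉ χ).1
          rw [hPvol χ hχne, hwsum χ, Finset.sum_mul]
      _ = ∑ χ ∈ T', ∑ i, (if i ∈ χ then w i * volume (Ω χ) else 0) := by
          refine Finset.sum_congr rfl fun χ _ => ?_
          rw [Finset.sum_ite_mem, Finset.univ_inter]
      _ = ∑ i, ∑ χ ∈ T', (if i ∈ χ then w i * volume (Ω χ) else 0) :=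
          Finset.sum_comm
      _ ≤ ∑ i, w i * volume (A i \ A j) := by
          refine Finset.sum_le_sum fun i _ => ?_
          rw [← Finset.sum_filter, ← Finset.mul_sum]
          refine mul_le_mul_right ?_ (w i)
          rw [← measure_biUnion_finset
            (fun χ _ χ' _ hne => partElem_disjoint A hne) (fun χ _ => hΩmeas χ)]
          refine measure_mono (iUnion₂_subset fun χ hχ => ?_)
          have h1 : (χ.Nonempty ∧ j ∉ χ) ∧ i ∈ χ := by simpa [hT'] using hχ
          intro y hy
          exact ⟨(mem_partElem.mp hy i).1 h1.2,
            fun hyj => h1.1.2 ((mem_partElem.mp hy j).2 hyj)⟩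
  -- Combine
  have hDeq : ∀ i, volume ((A j \ A i) ∪ (A i \ A j))
      = volume (A j \ A i) + volume (A i \ A j) := fun i =>
    measure_union disjoint_sdiff_sdiff ((hclosed i).measurableSet.diff
      (hclosed j).measurableSet)
  have hDfin : ∀ i, volume ((A j \ A i) ∪ (A i \ A j)) ≠ ⊤ := by
    intro i
    refine ((measure_mono ?_).trans_lt ((hA j).2.1.union (hA i).2.1).measure_lt_top).ne
    exact union_subset_union diff_subset diff_subset
  have key : volume ((A j \ B) ∪ (B \ A j))
      ≤ ∑ i, w i * volume ((A j \ A i) ∪ (A i \ A j)) := by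
    calc volume ((A j \ B) ∪ (B \ A j))
        ≤ volume (A j \ B) + volume (B \ A j) := measure_union_le _ _
      _ ≤ (∑ i, w i * volume (A j \ A i)) + ∑ i, w i * volume (A i \ A j) :=
          add_le_add key1 key2
      _ = ∑ i, w i * volume ((A j \ A i) ∪ (A i \ A j)) := by
          rw [← Finset.sum_add_distrib]
          exact Finset.sum_congr rfl fun i _ => by rw [hDeq i, mul_add]
  have hRfin : (∑ i, w i * volume ((A j \ A i) ∪ (A i \ A j))) ≠ ⊤ := by
    refine (ENNReal.sum_lt_top.mpr fun i _ => ?_).ne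
    exact ENNReal.mul_lt_top ENNReal.ofReal_lt_top (lt_top_iff_ne_top.mpr (hDfin i))
  calc dmu (A j) B = (volume ((A j \ B) ∪ (B \ A j))).toReal := rfl
    _ ≤ (∑ i, w i * volume ((A j \ A i) ∪ (A i \ A j))).toReal :=
        ENNReal.toReal_mono hRfin key
    _ = ∑ i, (w i * volume ((A j \ A i) ∪ (A i \ A j))).toReal :=
        ENNReal.toReal_sum fun i _ =>
          (ENNReal.mul_lt_top ENNReal.ofReal_lt_top
            (lt_top_iff_ne_top.mpr (hDfin i))).ne
    _ = ∑ i, α i * dmu (A j) (A i) := by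
        refine Finset.sum_congr rfl fun i _ => ?_
        rw [ENNReal.toReal_mul, hw, ENNReal.toReal_ofReal (hα i)]
        rfl
lemma bern_nonneg {n i : ℕ} {x : ℝ} (h0 : 0 ≤ x) (h1 : x ≤ 1) : 0 ≤ bern n i x :=
  mul_nonneg (mul_nonneg (Nat.cast_nonneg _) (pow_nonneg h0 _))
    (pow_nonneg (by linarith) _)

lemma bern_sum {n : ℕ} {x : ℝ} : ∑ i : Fin (n+1), bern n (i : ℕ) x = 1 := by
  rw [Fin.sum_univ_eq_sum_range (fun i => bern n i x)]
  calc ∑ i ∈ Finset.range (n+1), bern n i x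
      = ∑ k ∈ Finset.range (n+1), x ^ k * (1-x) ^ (n-k) * (n.choose k : ℝ) :=
        Finset.sum_congr rfl fun k _ => by rw [bern]; ring
    _ = (x + (1-x))^n := (add_pow x (1-x) n).symm
    _ = 1 := by norm_num

/-- if x′ is a closest node to x among i/n, i = 0,…,n, then
d_μ(F(x), B_n(F,x)) ≤ 2 d_μ(F(x′), F(x)) + ∑_{i=0}^n b(n,x;i) d_μ(F(x), F(i/n)). -/
theorem stmt_13 {m : ℕ} (S : SubsetGen m) (F : ℝ → Set (Em m))
    (hF : ∀ x ∈ Set.Icc (0:ℝ) 1, MemJ (F x))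
    (n : ℕ) (hn : 1 ≤ n) (x : ℝ) (hx : x ∈ Set.Icc (0:ℝ) 1)
    (x' : ℝ) (hx'node : ∃ i : Fin (n+1), x' = (i : ℕ) / n)
    (hx'closest : ∀ i : Fin (n+1), |x - x'| ≤ |x - (i : ℕ) / n|) :
    dmu (F x) (setBern S F n x) ≤
      2 * dmu (F x') (F x) +
        ∑ i : Fin (n+1), bern n (i : ℕ) x * dmu (F x) (F ((i : ℕ) / n)) := by
  classical
  obtain ⟨i₀, hi₀⟩ := hx'node
  set α : Fin (n+1) → ℝ := fun i => bern n (i : ℕ) x with hαdef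
  set A : Fin (n+1) → Set (Em m) := fun i => F ((i : ℕ) / n) with hAdef
  have hnode : ∀ i : Fin (n+1), ((i : ℕ) / n : ℝ) ∈ Set.Icc (0:ℝ) 1 := by
    intro i
    have hnpos : (0:ℝ) < n := by exact_mod_cast hn
    constructor
    · positivity
    · rw [div_le_one hnpos]
      exact_mod_cast Fin.is_le i
  have hA : ∀ i, MemJ (A i) := fun i => hF _ (hnode i)
  have hα : ∀ i, 0 ≤ α i := fun i => bern_nonneg hx.1 hx.2
  have hsum : ∑ i, α i = 1 := bern_sum
  have hFx : MemJ (F x) := hF x hx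
  have hFx' : F x' = A i₀ := by rw [hi₀]
  set B : Set (Em m) := setBern S F n x with hBdef
  have hBeq : B = partAvg S α A := rfl
  -- finiteness
  have hfinFx : volume (F x) ≠ ⊤ := hFx.2.1.measure_lt_top.ne
  have hfinA : ∀ i, volume (A i) ≠ ⊤ := fun i => (hA i).2.1.measure_lt_top.ne
  have hfinFx' : volume (F x') ≠ ⊤ := by rw [hFx']; exact hfinA i₀
  have hBsub : B ⊆ ⋃ i, A i := by
    rw [hBeq, partAvg]
    refine iUnion₂_subset fun χ hχ => ?_
    have hχne : χ.Nonempty := hχ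
    obtain ⟨k, hk⟩ := hχne
    have hs0 : 0 ≤ ∑ j ∈ χ, α j := Finset.sum_nonneg fun i _ => hα i
    have hs1 : (∑ j ∈ χ, α j) ≤ 1 := by
      rw [← hsum]
      exact Finset.sum_le_sum_of_subset_of_nonneg (Finset.subset_univ χ) fun i _ _ => hα i
    refine ((S.subset _ _ (jordanMeas_partElem (fun i => (hA i).2) ⟨k, hk⟩)
      hs0 hs1).trans ((partElem_subset hk).trans ?_))
    exact subset_iUnion A k
  have hfinB : volume B ≠ ⊤ := by
    refine ((measure_mono hBsub).trans_lt ?_).ne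
    refine (measure_iUnion_fintype_le volume A).trans_lt ?_
    exact ENNReal.sum_lt_top.mpr fun i _ => lt_top_iff_ne_top.mpr (hfinA i)
  -- main chain
  have h1 : dmu (F x) B ≤ dmu (F x) (F x') + dmu (F x') B :=
    dmu_triangle _ _ _ hfinFx hfinFx' hfinB
  have h2 : dmu (F x') B ≤ ∑ i, α i * dmu (F x') (A i) := by
    rw [hFx', hBeq]
    exact dmu_partAvg_le S α A hA hα hsum i₀
  have h3 : ∀ i, dmu (F x') (A i) ≤ dmu (F x') (F x) + dmu (F x) (A i) := fun i =>
    dmu_triangle _ _ _ hfinFx' hfinFx (hfinA i)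
  have h4 : (∑ i, α i * dmu (F x') (A i)) ≤
      dmu (F x') (F x) + ∑ i, α i * dmu (F x) (A i) := by
    calc (∑ i, α i * dmu (F x') (A i))
        ≤ ∑ i, α i * (dmu (F x') (F x) + dmu (F x) (A i)) :=
          Finset.sum_le_sum fun i _ => mul_le_mul_of_nonneg_left (h3 i) (hα i)
      _ = (∑ i, α i) * dmu (F x') (F x) + ∑ i, α i * dmu (F x) (A i) := by
          rw [Finset.sum_mul]
          rw [← Finset.sum_add_distrib]
          exact Finset.sum_congr rfl fun i _ => by ring
      _ = dmu (F x') (F x) + ∑ i, α i * dmu (F x) (A i) := by rw [hsum, one_mul]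
  have hcomm : dmu (F x) (F x') = dmu (F x') (F x) := dmu_comm _ _
  have : dmu (F x) B ≤ 2 * dmu (F x') (F x) + ∑ i, α i * dmu (F x) (A i) := by
    calc dmu (F x) B ≤ dmu (F x) (F x') + dmu (F x') B := h1
      _ ≤ dmu (F x) (F x') + (dmu (F x') (F x) + ∑ i, α i * dmu (F x) (A i)) := by
          linarith [h2.trans h4]
      _ = 2 * dmu (F x') (F x) + ∑ i, α i * dmu (F x) (A i) := by
          rw [hcomm]; ring
  exact this
end
end
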